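/- The average AoI of the network admits the closed form (1/(nT)) Σ_{v ∈ V} ∫₀^T A(v,t) dt = (1/(nT)) Σ_{v ∈ V} Σ_{j=1}^{k_v+1} (2·A_{v,j−1} + Λ_{v,j})·Λ_{v,j} / 2, where for each vertex v: A_{v,0} = A₀ and A_{v,j} = 1 + dist(s_{i_j}, v) for 1 ≤ j ≤ k_v; Λ_{v,1} = 1 + (i₁ − 1)Δ + dist(s_{i₁}, v) = τ₁(v); Λ_{v,j} = τ_j(v) − τ_{j−1}(v) = (i_j − i_{j−1})Δ + dist(s_{i_j},v) − dist(s_{i_{j−1}},v) for 2 ≤ j ≤ k_v; and Λ_{v,k_v+1} = T − τ_{k_v}(v) = T − 1 − (k − 1)Δ − dist(s_k, v). -/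
import Mathlib


open Finset

def tsel (Δ j : ℕ) : ℕ := (j - 1) * Δ + 1

noncomputable def AoI {V : Type*} (G : SimpleGraph V) (s : ℕ → V) (Δ k A0 : ℕ) (v : V) :
    ℕ → ℕ
  | 0 => A0
  | t + 1 =>
    let prev := AoI G s Δ k A0 v t
    let Ω : Finset ℕ := (Finset.Icc 1 k).filter
      (fun j => t + 1 = tsel Δ j + G.dist (s j) v ∧ G.dist (s j) v + 1 ≤ prev)
    if h : Ω.Nonempty then Ω.inf' h (fun j => 1 + G.dist (s j) v) else prev + 1

noncomputable def AoIR {V : Type*} (G : SimpleGraph V) (s : ℕ → V) (Δ k A0 : ℕ) (v : V)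
    (t : ℝ) : ℝ :=
  (AoI G s Δ k A0 v ⌊t⌋₊ : ℝ) + (t - ⌊t⌋₊)

open scoped Classical in
noncomputable def Dset {V : Type*} (G : SimpleGraph V) (s : ℕ → V) (Δ k : ℕ) (v : V) :
    Finset ℕ :=
  (Finset.Icc 1 k).filter (fun x => ∀ y ∈ Finset.Icc 1 k, x < y →
    tsel Δ x + G.dist (s x) v < tsel Δ y + G.dist (s y) v)

lemma tsel_mono (Δ : ℕ) {x y : ℕ} (h : x ≤ y) : tsel Δ x ≤ tsel Δ y := by
  unfold tsel
  have : (x-1)*Δ ≤ (y-1)*Δ := Nat.mul_le_mul_right _ (by omega)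
  omega

lemma tsel_strict {Δ : ℕ} (hΔ : 1 ≤ Δ) {x y : ℕ} (hx : 1 ≤ x) (hxy : x < y) :
    tsel Δ x < tsel Δ y := by
  unfold tsel
  have : (x-1)*Δ < (y-1)*Δ := by
    apply Nat.mul_lt_mul_of_lt_of_le (by omega) le_rfl (by omega)
  omega

lemma sum_arith (c : ℝ) : ∀ n : ℕ, ∑ m ∈ Finset.range n, (c + m + 1/2) = (2*c + n)*n/2
  | 0 => by simp
  | n+1 => by rw [Finset.sum_range_succ, sum_arith c n]; push_cast; ring

lemma AoI_zero {V : Type*} (G : SimpleGraph V) (s : ℕ → V) (Δ k A0 : ℕ) (v : V) :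
    AoI G s Δ k A0 v 0 = A0 := by rw [AoI]

lemma AoI_step_empty {V : Type*} (G : SimpleGraph V) (s : ℕ → V) (Δ k A0 : ℕ) (v : V) (t : ℕ)
    (hemp : ∀ x ∈ Finset.Icc 1 k, ¬(t + 1 = tsel Δ x + G.dist (s x) v ∧
      G.dist (s x) v + 1 ≤ AoI G s Δ k A0 v t)) :
    AoI G s Δ k A0 v (t+1) = AoI G s Δ k A0 v t + 1 := by
  rw [AoI, dif_neg]
  simp only [Finset.not_nonempty_iff_eq_empty, Finset.filter_eq_empty_iff]
  exact hemp

lemma AoI_step_reset {V : Type*} (G : SimpleGraph V) (s : ℕ → V) (Δ k A0 : ℕ) (v : V)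
    (t j : ℕ) (hj : j ∈ Finset.Icc 1 k)
    (ht : t + 1 = tsel Δ j + G.dist (s j) v)
    (hprev : G.dist (s j) v + 1 ≤ AoI G s Δ k A0 v t)
    (hmin : ∀ x ∈ Finset.Icc 1 k, t + 1 = tsel Δ x + G.dist (s x) v →
      G.dist (s j) v ≤ G.dist (s x) v) :
    AoI G s Δ k A0 v (t+1) = 1 + G.dist (s j) v := by
  classical
  have hjΩ : j ∈ (Finset.Icc 1 k).filter
      (fun x => t + 1 = tsel Δ x + G.dist (s x) v ∧
        G.dist (s x) v + 1 ≤ AoI G s Δ k A0 v t) := by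
    simp only [Finset.mem_filter]
    exact ⟨hj, ht, hprev⟩
  rw [AoI, dif_pos ⟨j, hjΩ⟩]
  apply le_antisymm
  · exact Finset.inf'_le _ hjΩ
  · apply Finset.le_inf'
    intro x hx
    simp only [Finset.mem_filter] at hx
    exact Nat.add_le_add_left (hmin x hx.1 hx.2.1) 1

lemma AoI_run {V : Type*} (G : SimpleGraph V) (s : ℕ → V) (Δ k A0 : ℕ) (v : V)
    (a b c : ℕ) (hc : AoI G s Δ k A0 v a = c)
    (hgap : ∀ t, a < t → t ≤ b → ∀ x ∈ Finset.Icc 1 k,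
      t = tsel Δ x + G.dist (s x) v → c + (t - (a+1)) ≤ G.dist (s x) v) :
    ∀ t, a ≤ t → t ≤ b → AoI G s Δ k A0 v t = c + (t - a) := by
  intro t hat
  induction t, hat using Nat.le_induction with
  | base => intro _; simpa using hc
  | succ t hat ih =>
    intro htb
    have h1 : AoI G s Δ k A0 v t = c + (t - a) := ih (by omega)
    rw [AoI_step_empty]
    · omega
    · intro x hx ⟨he, hle⟩
      have := hgap (t+1) (by omega) htb x hx he
      omega

lemma survivor {V : Type*} (G : SimpleGraph V) (s : ℕ → V) (Δ k : ℕ) (v : V)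
    {x : ℕ} (hx : x ∈ Finset.Icc 1 k) :
    ∃ y ∈ Dset G s Δ k v, x ≤ y ∧
      tsel Δ y + G.dist (s y) v ≤ tsel Δ x + G.dist (s x) v := by
  classical
  set τ' : ℕ → ℕ := fun z => tsel Δ z + G.dist (s z) v with hτ'
  set S := (Finset.Icc x k).filter (fun z => τ' z ≤ τ' x) with hS
  have hxS : x ∈ S := by
    simp only [hS, Finset.mem_filter, Finset.mem_Icc]
    simp only [Finset.mem_Icc] at hx
    exact ⟨⟨le_rfl, hx.2⟩, le_rfl⟩
  obtain ⟨y, hyS, hymin⟩ := S.exists_min_image (fun z => τ' z * (k+1) + (k - z)) ⟨x, hxS⟩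
  simp only [hS, Finset.mem_filter, Finset.mem_Icc] at hyS
  simp only [Finset.mem_Icc] at hx
  refine ⟨y, ?_, hyS.1.1, hyS.2⟩
  unfold Dset
  simp only [Finset.mem_filter, Finset.mem_Icc]
  refine ⟨⟨by omega, hyS.1.2⟩, ?_⟩
  intro z hz hyz
  obtain ⟨hz1, hz2⟩ := hz
  by_contra hle
  push_neg at hle
  have hzS : z ∈ S := by
    simp only [hS, Finset.mem_filter, Finset.mem_Icc]
    exact ⟨⟨by omega, hz2⟩, le_trans hle hyS.2⟩
  have hzz := hymin z hzS
  rcases Nat.lt_or_ge (τ' z) (τ' y) with hlt | hge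
  · have key : (τ' z + 1) * (k+1) ≤ τ' y * (k+1) := Nat.mul_le_mul_right _ hlt
    rw [add_mul, one_mul] at key
    have hky : k - y ≤ k := Nat.sub_le _ _
    omega
  · have heq : τ' z = τ' y := le_antisymm hle hge
    rw [heq] at hzz
    omega

lemma tsel_pos (Δ x : ℕ) : 1 ≤ tsel Δ x := by unfold tsel; omega

lemma sum_formula {V : Type*} (G : SimpleGraph V) (s : ℕ → V) (Δ k A0 T : ℕ)
    (hΔ : 1 ≤ Δ) (hk : 1 ≤ k) (hA0 : 1 ≤ A0) (v : V)
    (i : ℕ → ℕ) (kv : ℕ)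
    (hmono : StrictMonoOn i (Set.Icc 1 kv))
    (him : Dset G s Δ k v = (Finset.Icc 1 kv).image i)
    (hT : tsel Δ (i kv) + G.dist (s (i kv)) v ≤ T)
    (AA Lam : ℕ → ℝ)
    (hAA0 : AA 0 = A0)
    (hAAj : ∀ j, 1 ≤ j → j ≤ kv → AA j = 1 + G.dist (s (i j)) v)
    (hLam1 : Lam 1 = 1 + (((i 1 - 1) * Δ : ℕ) : ℝ) + G.dist (s (i 1)) v)
    (hLamMid : ∀ j, 2 ≤ j → j ≤ kv →
      Lam j = ((i j : ℝ) - (i (j - 1) : ℝ)) * Δ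
        + G.dist (s (i j)) v - G.dist (s (i (j - 1))) v)
    (hLamEnd : Lam (kv + 1) = (T : ℝ) - 1 - (((k - 1) * Δ : ℕ) : ℝ) - G.dist (s k) v) :
    ∑ t ∈ Finset.range T, ((AoI G s Δ k A0 v t : ℝ) + 1/2)
      = ∑ j ∈ Finset.Icc 1 (kv + 1), (2 * AA (j - 1) + Lam j) * Lam j / 2 := by
  classical
  set d : ℕ → ℕ := fun m => G.dist (s (i m)) v with hd
  set τ : ℕ → ℕ := fun m => tsel Δ (i m) + d m with hτ
  have hddef : ∀ m, d m = G.dist (s (i m)) v := fun m => by simp only [hd]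
  have hτdef : ∀ m, τ m = tsel Δ (i m) + G.dist (s (i m)) v := fun m => by
    simp only [hτ, hd]
  -- basic facts
  have hkD : k ∈ Dset G s Δ k v := by
    unfold Dset
    simp only [Finset.mem_filter, Finset.mem_Icc]
    exact ⟨⟨hk, le_rfl⟩, fun y hy hky => by omega⟩
  have hkv1 : 1 ≤ kv := by
    rw [him, Finset.mem_image] at hkD
    obtain ⟨m, hm, -⟩ := hkD
    simp only [Finset.mem_Icc] at hm
    omega
  have hiD : ∀ m, 1 ≤ m → m ≤ kv → i m ∈ Dset G s Δ k v := by
    intro m h1 h2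
    rw [him, Finset.mem_image]
    exact ⟨m, Finset.mem_Icc.mpr ⟨h1, h2⟩, rfl⟩
  have hDIcc : ∀ x ∈ Dset G s Δ k v, 1 ≤ x ∧ x ≤ k := by
    intro x hx
    unfold Dset at hx
    simp only [Finset.mem_filter, Finset.mem_Icc] at hx
    exact hx.1
  have hiIcc : ∀ m, 1 ≤ m → m ≤ kv → 1 ≤ i m ∧ i m ≤ k := fun m h1 h2 =>
    hDIcc _ (hiD m h1 h2)
  have hDprop : ∀ x ∈ Dset G s Δ k v, ∀ y, 1 ≤ y → y ≤ k → x < y →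
      tsel Δ x + G.dist (s x) v < tsel Δ y + G.dist (s y) v := by
    intro x hx y hy1 hy2 hxy
    unfold Dset at hx
    simp only [Finset.mem_filter, Finset.mem_Icc] at hx
    exact hx.2 y ⟨hy1, hy2⟩ hxy
  have himono : ∀ m m', 1 ≤ m → m ≤ m' → m' ≤ kv → i m ≤ i m' := by
    intro m m' h1 h2 h3
    rcases eq_or_lt_of_le h2 with rfl | hlt
    · exact le_rfl
    · exact le_of_lt (hmono ⟨h1, by omega⟩ ⟨by omega, h3⟩ hlt)
  have hik : i kv = k := by
    have h1 : i kv ≤ k := (hiIcc kv hkv1 le_rfl).2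
    have h2 : k ≤ i kv := by
      rw [him, Finset.mem_image] at hkD
      obtain ⟨m, hm, hmk⟩ := hkD
      simp only [Finset.mem_Icc] at hm
      calc k = i m := hmk.symm
        _ ≤ i kv := himono m kv hm.1 hm.2 le_rfl
    omega
  have hτmono : ∀ m m', 1 ≤ m → m < m' → m' ≤ kv → τ m < τ m' := by
    intro m m' h1 h2 h3
    rw [hτdef m, hτdef m']
    exact hDprop (i m) (hiD m h1 (by omega)) (i m') (hiIcc m' (by omega) h3).1
      (hiIcc m' (by omega) h3).2 (hmono ⟨h1, by omega⟩ ⟨by omega, h3⟩ h2)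
  have hτle : ∀ m m', 1 ≤ m → m ≤ m' → m' ≤ kv → τ m ≤ τ m' := by
    intro m m' h1 h2 h3
    rcases eq_or_lt_of_le h2 with rfl | hlt
    · exact le_rfl
    · exact le_of_lt (hτmono m m' h1 hlt h3)
  have hτpos : ∀ m, 1 ≤ τ m := by
    intro m
    rw [hτdef m]
    have := tsel_pos Δ (i m)
    omega
  -- every arrival is dominated by a surviving arrival
  have harr : ∀ t, ∀ x, 1 ≤ x → x ≤ k → t = tsel Δ x + G.dist (s x) v →
      ∃ m, 1 ≤ m ∧ m ≤ kv ∧ τ m ≤ t ∧ x ≤ i m := by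
    intro t x hx1 hx2 he
    obtain ⟨y, hyD, hxy, hyle⟩ := survivor G s Δ k v (Finset.mem_Icc.mpr ⟨hx1, hx2⟩)
    rw [him, Finset.mem_image] at hyD
    obtain ⟨m, hm, hmy⟩ := hyD
    simp only [Finset.mem_Icc] at hm
    refine ⟨m, hm.1, hm.2, ?_, by omega⟩
    have h2 : τ m = tsel Δ y + G.dist (s y) v := by rw [hτdef m, hmy]
    omega
  -- key induction over blocks
  have key : ∀ j, 1 ≤ j → j ≤ kv →
      AoI G s Δ k A0 v (τ j) = 1 + d j ∧
      ∑ t ∈ Finset.range (τ j), ((AoI G s Δ k A0 v t : ℝ) + 1/2)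
        = ∑ m ∈ Finset.Icc 1 j, (2 * AA (m - 1) + Lam m) * Lam m / 2 := by
    intro j hj1
    induction j, hj1 using Nat.le_induction with
    | base =>
      intro hjkv
      have hr := AoI_run G s Δ k A0 v 0 (τ 1 - 1) A0 (AoI_zero G s Δ k A0 v) ?hgap
      case hgap =>
        intro t ht0 htb x hx he
        exfalso
        simp only [Finset.mem_Icc] at hx
        obtain ⟨m, hm1, hm2, hm3, -⟩ := harr t x hx.1 hx.2 he
        have h4 := hτle 1 m le_rfl hm1 hm2
        have h5 := hτpos 1
        omega
      have hp1 := hτpos 1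
      have hτd1 := hτdef 1
      have htp1 := tsel_pos Δ (i 1)
      have hA1 : AoI G s Δ k A0 v (τ 1) = 1 + G.dist (s (i 1)) v := by
        have hτ1 : τ 1 = (τ 1 - 1) + 1 := by omega
        rw [hτ1]
        apply AoI_step_reset G s Δ k A0 v _ (i 1)
          (Finset.mem_Icc.mpr (hiIcc 1 le_rfl hkv1))
        · omega
        · rw [hr (τ 1 - 1) (by omega) le_rfl]
          omega
        · intro x hx he
          simp only [Finset.mem_Icc] at hx
          obtain ⟨m, hm1, hm2, hm3, hm4⟩ := harr _ x hx.1 hx.2 he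
          have hm1' : m = 1 := by
            by_contra hc
            have := hτmono 1 m le_rfl (by omega) hm2
            omega
          subst hm1'
          have h6 := tsel_mono Δ hm4
          omega
      constructor
      · rw [hA1, hddef]
      · have hsum : ∑ t ∈ Finset.range (τ 1), ((AoI G s Δ k A0 v t : ℝ) + 1/2)
            = ∑ m ∈ Finset.range (τ 1), ((A0:ℝ) + m + 1/2) := by
          apply Finset.sum_congr rfl
          intro t ht
          simp only [Finset.mem_range] at ht
          rw [hr t (by omega) (by omega)]
          simp only [Nat.sub_zero]
          push_cast
          ring
        rw [hsum, sum_arith]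
        have hI : Finset.Icc 1 1 = {1} := Finset.Icc_self 1
        rw [hI, Finset.sum_singleton]
        norm_num only
        rw [hAA0, hLam1]
        have hc : (τ 1 : ℝ) = 1 + (((i 1 - 1) * Δ : ℕ) : ℝ) + (G.dist (s (i 1)) v : ℝ) := by
          rw [hτd1]
          unfold tsel
          push_cast
          ring
        rw [hc]
    | succ j hj ih =>
      intro hjkv
      obtain ⟨hAj, hSj⟩ := ih (by omega)
      have hjj : τ j < τ (j+1) := hτmono j (j+1) hj (by omega) hjkv
      have hτdj := hτdef j
      have hτdj1 := hτdef (j+1)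
      have hddj := hddef j
      have hddj1 := hddef (j+1)
      have hii : i j < i (j+1) := hmono ⟨hj, by omega⟩ ⟨by omega, hjkv⟩ (by omega)
      have hij1 := (hiIcc j hj (by omega)).1
      have hr := AoI_run G s Δ k A0 v (τ j) (τ (j+1) - 1) (1 + d j) hAj ?hgap
      case hgap =>
        intro t ht1 ht2 x hx he
        simp only [Finset.mem_Icc] at hx
        obtain ⟨m, hm1, hm2, hm3, hm4⟩ := harr t x hx.1 hx.2 he
        have hmj : m ≤ j := by
          by_contra hc
          have := hτle (j+1) m (by omega) (by omega) hm2
          omega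
        have hxi : x ≤ i j := le_trans hm4 (himono m j hm1 hmj (by omega))
        have h6 := tsel_mono Δ hxi
        omega
      have hA : AoI G s Δ k A0 v (τ (j+1)) = 1 + G.dist (s (i (j+1))) v := by
        have hτs : τ (j+1) = (τ (j+1) - 1) + 1 := by have := hτpos (j+1); omega
        rw [hτs]
        apply AoI_step_reset G s Δ k A0 v _ (i (j+1))
          (Finset.mem_Icc.mpr (hiIcc (j+1) (by omega) hjkv))
        · omega
        · rw [hr (τ (j+1) - 1) (by omega) le_rfl]
          have h7 := tsel_strict hΔ hij1 hii
          omega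
        · intro x hx he
          simp only [Finset.mem_Icc] at hx
          obtain ⟨m, hm1, hm2, hm3, hm4⟩ := harr _ x hx.1 hx.2 he
          have hmj : m ≤ j + 1 := by
            by_contra hc
            have := hτmono (j+1) m (by omega) (by omega) hm2
            omega
          have hxi : x ≤ i (j+1) := le_trans hm4 (himono m (j+1) hm1 hmj hjkv)
          have h6 := tsel_mono Δ hxi
          omega
      constructor
      · rw [hA, hddef]
      · rw [← Finset.sum_range_add_sum_Ico _ (le_of_lt hjj), hSj,
          Finset.sum_Ico_eq_sum_range]
        have hblock : ∑ m ∈ Finset.range (τ (j+1) - τ j),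
            ((AoI G s Δ k A0 v (τ j + m) : ℝ) + 1/2)
            = ∑ m ∈ Finset.range (τ (j+1) - τ j), ((1 + (d j : ℝ)) + m + 1/2) := by
          apply Finset.sum_congr rfl
          intro m hm
          simp only [Finset.mem_range] at hm
          rw [hr (τ j + m) (by omega) (by omega)]
          have he2 : τ j + m - τ j = m := by omega
          rw [he2]
          push_cast
          ring
        rw [hblock, sum_arith]
        rw [Finset.sum_Icc_succ_top (by omega : 1 ≤ j + 1)]
        have hsameAA : AA (j + 1 - 1) = 1 + (d j : ℝ) := by
          have : j + 1 - 1 = j := by omega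
          rw [this, hAAj j hj (by omega), hddj]
        have hsameLam : ((τ (j+1) - τ j : ℕ) : ℝ) = Lam (j+1) := by
          rw [hLamMid (j+1) (by omega) hjkv]
          have h8 : j + 1 - 1 = j := by omega
          rw [h8]
          rw [Nat.cast_sub (le_of_lt hjj), hτdj, hτdj1]
          unfold tsel
          push_cast
          rw [Nat.cast_sub hij1, Nat.cast_sub (hiIcc (j+1) (by omega) hjkv).1]
          push_cast
          ring
        rw [hsameAA, hsameLam]
  -- final block
  obtain ⟨hA, hS⟩ := key kv hkv1 le_rfl
  have hτdk := hτdef kv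
  have hTτ : τ kv ≤ T := by rw [hτdk]; exact hT
  have hr := AoI_run G s Δ k A0 v (τ kv) T (1 + d kv) hA ?hgap
  case hgap =>
    intro t ht1 ht2 x hx he
    simp only [Finset.mem_Icc] at hx
    have h6 : tsel Δ x ≤ tsel Δ (i kv) := by rw [hik]; exact tsel_mono Δ hx.2
    have hddk := hddef kv
    omega
  rw [← Finset.sum_range_add_sum_Ico _ hTτ, hS, Finset.sum_Ico_eq_sum_range]
  have hblock : ∑ m ∈ Finset.range (T - τ kv),
      ((AoI G s Δ k A0 v (τ kv + m) : ℝ) + 1/2)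
      = ∑ m ∈ Finset.range (T - τ kv), ((1 + (d kv : ℝ)) + m + 1/2) := by
    apply Finset.sum_congr rfl
    intro m hm
    simp only [Finset.mem_range] at hm
    rw [hr (τ kv + m) (by omega) (by omega)]
    have he2 : τ kv + m - τ kv = m := by omega
    rw [he2]
    push_cast
    ring
  rw [hblock, sum_arith]
  rw [Finset.sum_Icc_succ_top (by omega : 1 ≤ kv + 1)]
  have hsameAA : AA (kv + 1 - 1) = 1 + (d kv : ℝ) := by
    have h9 : kv + 1 - 1 = kv := by omega
    rw [h9, hAAj kv hkv1 le_rfl, hddef]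
  have hsameLam : ((T - τ kv : ℕ) : ℝ) = Lam (kv + 1) := by
    rw [hLamEnd, Nat.cast_sub hTτ, hτdk, hik]
    unfold tsel
    push_cast
    ring
  rw [hsameAA, hsameLam]

lemma AoIR_ae {V : Type*} (G : SimpleGraph V) (s : ℕ → V) (Δ k A0 : ℕ) (v : V) (n : ℕ) :
    ∀ᵐ t : ℝ ∂MeasureTheory.volume, t ∈ Set.Ioc (n:ℝ) ((n:ℝ)+1) →
      AoIR G s Δ k A0 v t = ((AoI G s Δ k A0 v n : ℝ) - n) + t := by
  have h1 : ∀ᵐ t : ℝ ∂MeasureTheory.volume, t ≠ ((n:ℝ)+1) := by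
    rw [MeasureTheory.ae_iff]
    have : {t : ℝ | ¬ t ≠ ((n:ℝ)+1)} = {((n:ℝ)+1)} := by ext t; simp
    rw [this]
    exact Real.volume_singleton
  filter_upwards [h1] with t ht hmem
  obtain ⟨hm1, hm2⟩ := hmem
  have h0 : (0:ℝ) ≤ t := le_trans (Nat.cast_nonneg n) (le_of_lt hm1)
  have hfl : ⌊t⌋₊ = n := by
    rw [Nat.floor_eq_iff h0]
    exact ⟨le_of_lt hm1, lt_of_le_of_ne hm2 ht⟩
  unfold AoIR
  rw [hfl]
  ring

lemma AoIR_intble {V : Type*} (G : SimpleGraph V) (s : ℕ → V) (Δ k A0 : ℕ) (v : V) (n : ℕ) :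
    IntervalIntegrable (AoIR G s Δ k A0 v) MeasureTheory.volume (n:ℝ) ((n:ℝ)+1) := by
  have hg : IntervalIntegrable (fun t => ((AoI G s Δ k A0 v n : ℝ) - n) + t)
      MeasureTheory.volume (n:ℝ) ((n:ℝ)+1) :=
    (continuous_const.add continuous_id).intervalIntegrable _ _
  rw [intervalIntegrable_iff_integrableOn_Ioc_of_le (by linarith)] at hg ⊢
  refine hg.congr ?_
  rw [Filter.EventuallyEq, MeasureTheory.ae_restrict_iff' measurableSet_Ioc]
  filter_upwards [AoIR_ae G s Δ k A0 v n] with t ht hmem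
  exact (ht hmem).symm

lemma AoIR_unit {V : Type*} (G : SimpleGraph V) (s : ℕ → V) (Δ k A0 : ℕ) (v : V) (n : ℕ) :
    ∫ t in (n:ℝ)..((n:ℝ)+1), AoIR G s Δ k A0 v t
      = (AoI G s Δ k A0 v n : ℝ) + 1/2 := by
  rw [intervalIntegral.integral_congr_ae (g := fun t => ((AoI G s Δ k A0 v n : ℝ) - n) + t)
    (by rw [Set.uIoc_of_le (by linarith : (n:ℝ) ≤ (n:ℝ)+1)]; exact AoIR_ae G s Δ k A0 v n)]
  rw [intervalIntegral.integral_add (f := fun _ => (AoI G s Δ k A0 v n : ℝ) - n)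
    (g := fun x => x) intervalIntegrable_const (continuous_id.intervalIntegrable _ _)]
  rw [intervalIntegral.integral_const, integral_id]
  simp only [smul_eq_mul]
  ring

lemma AoIR_intble' {V : Type*} (G : SimpleGraph V) (s : ℕ → V) (Δ k A0 : ℕ) (v : V) :
    ∀ N : ℕ, IntervalIntegrable (AoIR G s Δ k A0 v) MeasureTheory.volume 0 (N:ℝ)
  | 0 => by simp
  | N+1 => by
    have h2 := AoIR_intble G s Δ k A0 v N
    push_cast
    exact (AoIR_intble' G s Δ k A0 v N).trans (by push_cast at h2 ⊢; exact h2)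

lemma AoIR_sum {V : Type*} (G : SimpleGraph V) (s : ℕ → V) (Δ k A0 : ℕ) (v : V) :
    ∀ N : ℕ, ∫ t in (0:ℝ)..(N:ℝ), AoIR G s Δ k A0 v t
      = ∑ t ∈ Finset.range N, ((AoI G s Δ k A0 v t : ℝ) + 1/2)
  | 0 => by simp
  | N+1 => by
    rw [Finset.sum_range_succ, ← AoIR_sum G s Δ k A0 v N, ← AoIR_unit G s Δ k A0 v N]
    push_cast
    exact (intervalIntegral.integral_add_adjacent_intervals
      (by simpa using AoIR_intble' G s Δ k A0 v N)
      (by simpa using AoIR_intble G s Δ k A0 v N)).symm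

theorem stmt5 {V : Type*} [Fintype V] (G : SimpleGraph V) (hconn : G.Connected)
    (s : ℕ → V) (Δ k A0 T : ℕ) (hΔ : 1 ≤ Δ) (hk : 1 ≤ k) (hA0 : 1 ≤ A0)
    (i : V → ℕ → ℕ) (kv : V → ℕ)
    (hkv : ∀ v, kv v = (Dset G s Δ k v).card)
    (hi0 : ∀ v, i v 0 = 1)
    (hmono : ∀ v, StrictMonoOn (i v) (Set.Icc 1 (kv v)))
    (him : ∀ v, Dset G s Δ k v = (Finset.Icc 1 (kv v)).image (i v))
    (hT : ∀ v, tsel Δ (i v (kv v)) + G.dist (s (i v (kv v))) v ≤ T)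
    (AA : V → ℕ → ℝ) (Lam : V → ℕ → ℝ)
    (hAA0 : ∀ v, AA v 0 = A0)
    (hAAj : ∀ v, ∀ j, 1 ≤ j → j ≤ kv v → AA v j = 1 + G.dist (s (i v j)) v)
    (hLam1 : ∀ v, Lam v 1 = 1 + (((i v 1 - 1) * Δ : ℕ) : ℝ) + G.dist (s (i v 1)) v)
    (hLamMid : ∀ v, ∀ j, 2 ≤ j → j ≤ kv v →
      Lam v j = ((i v j : ℝ) - (i v (j - 1) : ℝ)) * Δ
        + G.dist (s (i v j)) v - G.dist (s (i v (j - 1))) v)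
    (hLamEnd : ∀ v, Lam v (kv v + 1)
      = (T : ℝ) - 1 - (((k - 1) * Δ : ℕ) : ℝ) - G.dist (s k) v) :
    (1 / ((Fintype.card V : ℝ) * T)) *
        ∑ v : V, ∫ t in (0:ℝ)..(T:ℝ), AoIR G s Δ k A0 v t
      = (1 / ((Fintype.card V : ℝ) * T)) *
        ∑ v : V, ∑ j ∈ Finset.Icc 1 (kv v + 1),
          (2 * AA v (j - 1) + Lam v j) * Lam v j / 2 := by
  congr 1
  refine Finset.sum_congr rfl fun v _ => ?_
  rw [AoIR_sum G s Δ k A0 v T]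
  exact sum_formula G s Δ k A0 T hΔ hk hA0 v (i v) (kv v) (hmono v) (him v) (hT v)
    (AA v) (Lam v) (hAA0 v) (hAAj v) (hLam1 v) (hLamMid v) (hLamEnd v)
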